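/- Let Q = {(x,y) ∈ ℝ² : x > 0, y > 0}, Q₁ = {u ∈ Q : slope(u) < 1}, Q₂ = {u ∈ Q : slope(u) > 1}, where slope(x,y) = y/x. Let u, v ∈ Q have distinct slopes. Then there exists A ∈ GL(2,ℤ) such that ‖Au‖ ≤ ‖u‖, ‖Av‖ ≤ ‖v‖, both Au and Av lie in Q, and either one of Au, Av lies on the diagonal {y = x}, or one lies in Q₁ and the other in Q₂. -/

import Mathlib

/-- The open first quadrant of the Euclidean plane. -/
def Qset : Set (EuclideanSpace ℝ (Fin 2)) := {u | 0 < u 0 ∧ 0 < u 1}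

/-- The slope of a vector. -/
noncomputable def slopeVec (u : EuclideanSpace ℝ (Fin 2)) : ℝ := u 1 / u 0

/-- Vectors of the first quadrant with slope less than one. -/
def Qone : Set (EuclideanSpace ℝ (Fin 2)) := {u ∈ Qset | slopeVec u < 1}

/-- Vectors of the first quadrant with slope greater than one. -/
def Qtwo : Set (EuclideanSpace ℝ (Fin 2)) := {u ∈ Qset | 1 < slopeVec u}

/-- The linear action of an integer `2×2` matrix on the Euclidean plane. -/
noncomputable def actE (A : Matrix (Fin 2) (Fin 2) ℤ) (w : EuclideanSpace ℝ (Fin 2)) :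
    EuclideanSpace ℝ (Fin 2) :=
  (show EuclideanSpace ℝ (Fin 2) from WithLp.toLp 2 (fun i => ∑ j, (A i j : ℝ) * w j))

def Tm (k : ℤ) : Matrix (Fin 2) (Fin 2) ℤ := !![1, -k; 0, 1]
def Sm : Matrix (Fin 2) (Fin 2) ℤ := !![0, 1; 1, 0]

lemma actE_mul (A B : Matrix (Fin 2) (Fin 2) ℤ) (w : EuclideanSpace ℝ (Fin 2)) :
    actE (A * B) w = actE A (actE B w) := by
  ext i
  simp only [actE, Matrix.mul_apply, PiLp.toLp_apply]
  push_cast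
  simp only [Finset.sum_mul, Finset.mul_sum, mul_assoc]
  rw [Finset.sum_comm]

lemma actE_one (w : EuclideanSpace ℝ (Fin 2)) : actE 1 w = w := by
  ext i
  simp [actE, Matrix.one_apply]

lemma actE_Tm0 (k : ℤ) (w : EuclideanSpace ℝ (Fin 2)) :
    actE (Tm k) w 0 = w 0 - (k : ℝ) * w 1 := by
  simp [actE, Tm, Fin.sum_univ_two]; ring

lemma actE_Tm1 (k : ℤ) (w : EuclideanSpace ℝ (Fin 2)) : actE (Tm k) w 1 = w 1 := by
  simp [actE, Tm, Fin.sum_univ_two]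

lemma actE_Sm0 (w : EuclideanSpace ℝ (Fin 2)) : actE Sm w 0 = w 1 := by
  simp [actE, Sm, Fin.sum_univ_two]

lemma actE_Sm1 (w : EuclideanSpace ℝ (Fin 2)) : actE Sm w 1 = w 0 := by
  simp [actE, Sm, Fin.sum_univ_two]

lemma det_Tm (k : ℤ) : (Tm k).det = 1 := by simp [Tm, Matrix.det_fin_two_of]
lemma det_Sm : Sm.det = -1 := by simp [Sm, Matrix.det_fin_two_of]

lemma norm_le_E {w z : EuclideanSpace ℝ (Fin 2)}
    (h : w 0 ^ 2 + w 1 ^ 2 ≤ z 0 ^ 2 + z 1 ^ 2) : ‖w‖ ≤ ‖z‖ := by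
  rw [EuclideanSpace.norm_eq, EuclideanSpace.norm_eq]
  apply Real.sqrt_le_sqrt
  simpa [Fin.sum_univ_two, sq_abs] using h

def Concl (u v : EuclideanSpace ℝ (Fin 2)) : Prop :=
  ∃ A : Matrix (Fin 2) (Fin 2) ℤ, (A.det = 1 ∨ A.det = -1) ∧
      ‖actE A u‖ ≤ ‖u‖ ∧ ‖actE A v‖ ≤ ‖v‖ ∧
      actE A u ∈ Qset ∧ actE A v ∈ Qset ∧
      (actE A u 1 = actE A u 0 ∨ actE A v 1 = actE A v 0 ∨
        (actE A u ∈ Qone ∧ actE A v ∈ Qtwo) ∨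
        (actE A u ∈ Qtwo ∧ actE A v ∈ Qone))

lemma Concl_symm {u v : EuclideanSpace ℝ (Fin 2)} (h : Concl u v) : Concl v u := by
  obtain ⟨A, h1, h2, h3, h4, h5, h6⟩ := h
  exact ⟨A, h1, h3, h2, h5, h4, by tauto⟩

lemma Concl_comp (B : Matrix (Fin 2) (Fin 2) ℤ) (hB : B.det = 1 ∨ B.det = -1)
    (u v : EuclideanSpace ℝ (Fin 2))
    (h1 : ‖actE B u‖ ≤ ‖u‖) (h2 : ‖actE B v‖ ≤ ‖v‖)
    (h : Concl (actE B u) (actE B v)) : Concl u v := by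
  obtain ⟨A, hA, n1, n2, m1, m2, hd⟩ := h
  refine ⟨A * B, ?_, ?_, ?_, ?_, ?_, ?_⟩
  · rcases hA with hA | hA <;> rcases hB with hB | hB <;> simp [Matrix.det_mul, hA, hB]
  · rw [actE_mul]; exact le_trans n1 h1
  · rw [actE_mul]; exact le_trans n2 h2
  · rw [actE_mul]; exact m1
  · rw [actE_mul]; exact m2
  · rw [actE_mul, actE_mul]; exact hd

set_option maxHeartbeats 1600000 in
lemma key : ∀ n : ℕ, ∀ u v : EuclideanSpace ℝ (Fin 2), u ∈ Qset → v ∈ Qset →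
    u 1 < u 0 → v 1 < v 0 → v 0 * u 1 < u 0 * v 1 →
    u 1 * v 1 ≤ (n : ℝ) * (u 0 * v 1 - v 0 * u 1) → Concl u v := by
  intro n
  induction n with
  | zero =>
    intro u v hu hv h1 h2 hc hm
    exfalso
    have hu1 := hu.2
    have hv1 := hv.2
    simp at hm
    nlinarith
  | succ n ih =>
    intro u v hu hv hd1 hd2 hc hm
    obtain ⟨hu0, hu1⟩ := hu
    obtain ⟨hv0, hv1⟩ := hv
    push_cast at hm
    obtain ⟨k, hkdef⟩ : ∃ k : ℤ, k = ⌈v 0 / v 1⌉ - 1 := ⟨_, rfl⟩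
    have hkR : (k : ℝ) = (⌈v 0 / v 1⌉ : ℤ) - 1 := by rw [hkdef]; push_cast; ring
    have hceil1 : (1 : ℤ) < ⌈v 0 / v 1⌉ := by
      rw [Int.lt_ceil]
      push_cast
      exact (one_lt_div hv1).2 hd2
    have hk1 : (1 : ℤ) ≤ k := by omega
    have hk1R : (1 : ℝ) ≤ (k : ℝ) := by exact_mod_cast hk1
    have hbk : (k : ℝ) < v 0 / v 1 := by
      have := Int.ceil_lt_add_one (v 0 / v 1)
      rw [hkR]; linarith
    have hbk' : v 0 / v 1 ≤ (k : ℝ) + 1 := by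
      have := Int.le_ceil (v 0 / v 1)
      rw [hkR]; linarith
    have hkv : (k : ℝ) * v 1 < v 0 := (lt_div_iff₀ hv1).1 hbk
    have hkv' : v 0 ≤ ((k : ℝ) + 1) * v 1 := (div_le_iff₀ hv1).1 hbk'
    -- Q := v 0 - k * v 1, positive and ≤ v 1
    have hQpos : 0 < v 0 - (k : ℝ) * v 1 := by linarith
    have hQle : v 0 - (k : ℝ) * v 1 ≤ v 1 := by linarith
    -- P := u 0 - k * u 1, positive
    have hPpos : 0 < u 0 - (k : ℝ) * u 1 := by nlinarith [mul_pos hu1 hQpos]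
    have hleu : u 0 - (k : ℝ) * u 1 ≤ u 0 := by nlinarith
    have hlev : v 0 - (k : ℝ) * v 1 ≤ v 0 := by nlinarith
    have hsqu : (u 0 - (k : ℝ) * u 1) ^ 2 ≤ u 0 ^ 2 := pow_le_pow_left₀ hPpos.le hleu 2
    have hsqv : (v 0 - (k : ℝ) * v 1) ^ 2 ≤ v 0 ^ 2 := pow_le_pow_left₀ hQpos.le hlev 2
    -- memberships & norms for Tm k
    have hTu : actE (Tm k) u ∈ Qset := by
      constructor
      · rw [actE_Tm0]; exact hPpos
      · rw [actE_Tm1]; exact hu1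
    have hTv : actE (Tm k) v ∈ Qset := by
      constructor
      · rw [actE_Tm0]; exact hQpos
      · rw [actE_Tm1]; exact hv1
    have hNu : ‖actE (Tm k) u‖ ≤ ‖u‖ := by
      apply norm_le_E
      rw [actE_Tm0, actE_Tm1]
      linarith
    have hNv : ‖actE (Tm k) v‖ ≤ ‖v‖ := by
      apply norm_le_E
      rw [actE_Tm0, actE_Tm1]
      linarith
    rcases eq_or_lt_of_le hQle with hQeq | hQlt
    · -- v lands on the diagonal
      exact ⟨Tm k, Or.inl (det_Tm k), hNu, hNv, hTu, hTv,
        Or.inr (Or.inl (by rw [actE_Tm0, actE_Tm1]; linarith))⟩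
    rcases lt_trichotomy (u 0 - (k : ℝ) * u 1) (u 1) with hP | hP | hP
    · -- recursion case: both images in Q₂; swap and recurse
      have hdet : (Sm * Tm k).det = 1 ∨ (Sm * Tm k).det = -1 := by
        right; simp [Matrix.det_mul, det_Sm, det_Tm]
      have hBu0 : actE (Sm * Tm k) u 0 = u 1 := by rw [actE_mul, actE_Sm0, actE_Tm1]
      have hBu1 : actE (Sm * Tm k) u 1 = u 0 - (k : ℝ) * u 1 := by
        rw [actE_mul, actE_Sm1, actE_Tm0]
      have hBv0 : actE (Sm * Tm k) v 0 = v 1 := by rw [actE_mul, actE_Sm0, actE_Tm1]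
      have hBv1 : actE (Sm * Tm k) v 1 = v 0 - (k : ℝ) * v 1 := by
        rw [actE_mul, actE_Sm1, actE_Tm0]
      apply Concl_comp (Sm * Tm k) hdet u v
      · apply norm_le_E
        rw [hBu0, hBu1]
        linarith
      · apply norm_le_E
        rw [hBv0, hBv1]
        linarith
      apply Concl_symm
      apply ih
      · exact ⟨by rw [hBv0]; exact hv1, by rw [hBv1]; exact hQpos⟩
      · exact ⟨by rw [hBu0]; exact hu1, by rw [hBu1]; exact hPpos⟩
      · rw [hBv0, hBv1]; exact hQlt
      · rw [hBu0, hBu1]; exact hP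
      · rw [hBu0, hBu1, hBv0, hBv1]
        nlinarith
      · rw [hBu0, hBu1, hBv0, hBv1]
        -- (v0-kv1)(u0-ku1) ≤ n * (v1*(u0-ku1) - u1*(v0-kv1)) and the inner term is Δ
        have hfact : v 1 * (u 0 - (k : ℝ) * u 1) - u 1 * (v 0 - (k : ℝ) * v 1)
            = u 0 * v 1 - v 0 * u 1 := by ring
        rw [hfact]
        have h1 : (v 0 - (k : ℝ) * v 1) * (u 0 - (k : ℝ) * u 1)
            < u 1 * (v 0 - (k : ℝ) * v 1) := by
          nlinarith [mul_pos hQpos (sub_pos.2 hP)]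
        have h2 : u 1 * (v 0 - (k : ℝ) * v 1) ≤ (n : ℝ) * (u 0 * v 1 - v 0 * u 1) := by
          nlinarith [mul_pos (sub_pos.2 hP) hv1]
        linarith
    · -- u lands on the diagonal
      exact ⟨Tm k, Or.inl (det_Tm k), hNu, hNv, hTu, hTv,
        Or.inl (by rw [actE_Tm0, actE_Tm1]; linarith)⟩
    · -- separated: u ∈ Qone, v ∈ Qtwo
      refine ⟨Tm k, Or.inl (det_Tm k), hNu, hNv, hTu, hTv, Or.inr (Or.inr (Or.inl ⟨?_, ?_⟩))⟩
      · refine ⟨hTu, ?_⟩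
        show slopeVec (actE (Tm k) u) < 1
        unfold slopeVec
        rw [actE_Tm0, actE_Tm1]
        exact (div_lt_one hPpos).2 hP
      · refine ⟨hTv, ?_⟩
        show 1 < slopeVec (actE (Tm k) v)
        unfold slopeVec
        rw [actE_Tm0, actE_Tm1]
        exact (one_lt_div hQpos).2 hQlt

lemma key3 (u v : EuclideanSpace ℝ (Fin 2)) (hu : u ∈ Qset) (hv : v ∈ Qset)
    (h1 : u 1 < u 0) (h2 : v 1 < v 0) (h : v 0 * u 1 < u 0 * v 1) : Concl u v := by
  have hΔ : 0 < u 0 * v 1 - v 0 * u 1 := sub_pos.2 h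
  refine key (⌈(u 1 * v 1) / (u 0 * v 1 - v 0 * u 1)⌉.toNat) u v hu hv h1 h2 h ?_
  have hle : (u 1 * v 1) / (u 0 * v 1 - v 0 * u 1)
      ≤ ((⌈(u 1 * v 1) / (u 0 * v 1 - v 0 * u 1)⌉.toNat : ℤ) : ℝ) := by
    refine le_trans (Int.le_ceil _) ?_
    exact Int.cast_le.mpr (Int.self_le_toNat _)
  rw [div_le_iff₀ hΔ] at hle
  exact_mod_cast hle

lemma key2 (u v : EuclideanSpace ℝ (Fin 2)) (hu : u ∈ Qset) (hv : v ∈ Qset)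
    (h1 : u 1 < u 0) (h2 : v 1 < v 0) (h : v 0 * u 1 ≠ u 0 * v 1) : Concl u v := by
  rcases h.lt_or_gt with h | h
  · exact key3 u v hu hv h1 h2 h
  · exact Concl_symm (key3 v u hv hu h2 h1 (by linarith))


/-- Given `u, v` in the open first quadrant with distinct slopes, there is
`A ∈ GL(2,ℤ)` not increasing their Euclidean norms, keeping both in the first
quadrant, and such that either one image is on the diagonal, or one image has slope
less than one and the other slope greater than one. -/
theorem exists_gl2_separating (u v : EuclideanSpace ℝ (Fin 2))
    (hu : u ∈ Qset) (hv : v ∈ Qset) (hs : slopeVec u ≠ slopeVec v) :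
    ∃ A : Matrix (Fin 2) (Fin 2) ℤ, (A.det = 1 ∨ A.det = -1) ∧
      ‖actE A u‖ ≤ ‖u‖ ∧ ‖actE A v‖ ≤ ‖v‖ ∧
      actE A u ∈ Qset ∧ actE A v ∈ Qset ∧
      (actE A u 1 = actE A u 0 ∨ actE A v 1 = actE A v 0 ∨
        (actE A u ∈ Qone ∧ actE A v ∈ Qtwo) ∨
        (actE A u ∈ Qtwo ∧ actE A v ∈ Qone)) := by
  obtain ⟨hu0, hu1⟩ := hu
  obtain ⟨hv0, hv1⟩ := hv
  have huQ : u ∈ Qset := ⟨hu0, hu1⟩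
  have hvQ : v ∈ Qset := ⟨hv0, hv1⟩
  have hgoal : Concl u v → ∃ A : Matrix (Fin 2) (Fin 2) ℤ, (A.det = 1 ∨ A.det = -1) ∧
      ‖actE A u‖ ≤ ‖u‖ ∧ ‖actE A v‖ ≤ ‖v‖ ∧
      actE A u ∈ Qset ∧ actE A v ∈ Qset ∧
      (actE A u 1 = actE A u 0 ∨ actE A v 1 = actE A v 0 ∨
        (actE A u ∈ Qone ∧ actE A v ∈ Qtwo) ∨
        (actE A u ∈ Qtwo ∧ actE A v ∈ Qone)) := fun h => h
  apply hgoal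
  rcases eq_or_ne (slopeVec u) 1 with hsu | hsu
  · have : u 1 = u 0 := by
      have := (div_eq_one_iff_eq hu0.ne').1 hsu
      exact this
    exact ⟨1, Or.inl Matrix.det_one, by rw [actE_one], by rw [actE_one],
      by rw [actE_one]; exact huQ, by rw [actE_one]; exact hvQ,
      Or.inl (by rw [actE_one]; exact this)⟩
  rcases eq_or_ne (slopeVec v) 1 with hsv | hsv
  · have : v 1 = v 0 := (div_eq_one_iff_eq hv0.ne').1 hsv
    exact ⟨1, Or.inl Matrix.det_one, by rw [actE_one], by rw [actE_one],
      by rw [actE_one]; exact huQ, by rw [actE_one]; exact hvQ,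
      Or.inr (Or.inl (by rw [actE_one]; exact this))⟩
  rcases hsu.lt_or_gt with hsu | hsu <;> rcases hsv.lt_or_gt with hsv | hsv
  · -- both slopes < 1
    have h1 : u 1 < u 0 := by
      have := (div_lt_one hu0).1 hsu
      exact this
    have h2 : v 1 < v 0 := (div_lt_one hv0).1 hsv
    apply key2 u v huQ hvQ h1 h2
    intro h
    apply hs
    unfold slopeVec
    rw [div_eq_div_iff hu0.ne' hv0.ne']
    linarith
  · -- u slope < 1, v slope > 1 : identity separates
    exact ⟨1, Or.inl Matrix.det_one, by rw [actE_one], by rw [actE_one],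
      by rw [actE_one]; exact huQ, by rw [actE_one]; exact hvQ,
      Or.inr (Or.inr (Or.inl ⟨by rw [actE_one]; exact ⟨huQ, hsu⟩,
        by rw [actE_one]; exact ⟨hvQ, hsv⟩⟩))⟩
  · -- u slope > 1, v slope < 1
    exact ⟨1, Or.inl Matrix.det_one, by rw [actE_one], by rw [actE_one],
      by rw [actE_one]; exact huQ, by rw [actE_one]; exact hvQ,
      Or.inr (Or.inr (Or.inr ⟨by rw [actE_one]; exact ⟨huQ, hsu⟩,
        by rw [actE_one]; exact ⟨hvQ, hsv⟩⟩))⟩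
  · -- both slopes > 1 : swap first
    have h1 : u 0 < u 1 := by
      have := (one_lt_div hu0).1 hsu
      exact this
    have h2 : v 0 < v 1 := (one_lt_div hv0).1 hsv
    apply Concl_comp Sm (Or.inr det_Sm) u v
    · exact norm_le_E (by rw [actE_Sm0, actE_Sm1]; linarith)
    · exact norm_le_E (by rw [actE_Sm0, actE_Sm1]; linarith)
    apply key2
    · exact ⟨by rw [actE_Sm0]; exact hu1, by rw [actE_Sm1]; exact hu0⟩
    · exact ⟨by rw [actE_Sm0]; exact hv1, by rw [actE_Sm1]; exact hv0⟩
    · rw [actE_Sm0, actE_Sm1]; exact h1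
    · rw [actE_Sm0, actE_Sm1]; exact h2
    · rw [actE_Sm0, actE_Sm1, actE_Sm0, actE_Sm1]
      intro h
      apply hs
      unfold slopeVec
      rw [div_eq_div_iff hu0.ne' hv0.ne']
      linarith
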